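/- Let K ≥ 1 and let F_1,…,F_K : ℝ → [0,1] be cumulative distribution functions, each continuous, each strictly increasing at every point s ∈ ℝ (so that 0 < F_k(s) < 1 for all s ∈ ℝ), and each with finite first moment. Then for every u ∈ ℝ^K the unique maximizer p(u) of max_{p ∈ Δ^K} [ Σ_{k=1}^K u_k p_k + Σ_{k=1}^K ∫_{1−p_k}^1 F_k^{-1}(t) dt ] satisfies p_k(u) > 0 for every k ∈ [K]. -/

import Mathlib

open MeasureTheory Set Filter

noncomputable def simplex (K : ℕ) : Set (Fin K → ℝ) :=
  {p | (∀ k, 0 ≤ p k) ∧ ∑ k, p k = 1}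

noncomputable def quantile (F : ℝ → ℝ) (s : ℝ) : ℝ := sInf {t | s ≤ F t}

noncomputable def dopaObj {K : ℕ} (F : Fin K → ℝ → ℝ) (u p : Fin K → ℝ) : ℝ :=
  ∑ k, u k * p k + ∑ k, ∫ t in (1 - p k)..1, quantile (F k) t

section Aux

variable {F : ℝ → ℝ}

lemma quantile_bddBelow (hmono : StrictMono F) (hbot : Tendsto F atBot (nhds 0))
    {s : ℝ} (hs : 0 < s) : BddBelow {t | s ≤ F t} := by
  obtain ⟨T, hT⟩ := (hbot.eventually_lt_const hs).exists
  refine ⟨T, fun x hx => ?_⟩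
  by_contra h
  push_neg at h
  exact absurd hx (not_le.2 (lt_trans (hmono h) hT))

lemma le_quantile (hmono : StrictMono F) (htop : Tendsto F atTop (nhds 1))
    {s M : ℝ} (hs : s < 1) (h : F M < s) : M ≤ quantile F s := by
  obtain ⟨T, hT⟩ := (htop.eventually_const_lt hs).exists
  refine le_csInf ⟨T, hT.le⟩ fun x hx => ?_
  exact (hmono.lt_iff_lt.mp (lt_of_lt_of_le h hx)).le

lemma quantile_mono' (hmono : StrictMono F) (hbot : Tendsto F atBot (nhds 0))
    (htop : Tendsto F atTop (nhds 1)) {s s' : ℝ} (hs : 0 < s) (hss : s ≤ s') (hs' : s' < 1) :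
    quantile F s ≤ quantile F s' := by
  obtain ⟨T, hT⟩ := (htop.eventually_const_lt hs').exists
  exact csInf_le_csInf (quantile_bddBelow hmono hbot hs) ⟨T, hT.le⟩
    (fun x hx => le_trans hss hx)

lemma quantile_intervalIntegrable (hQint : IntegrableOn (quantile F) (Ioo (0:ℝ) 1))
    {a b : ℝ} (h0 : 0 ≤ a) (hab : a ≤ b) (hb1 : b ≤ 1) :
    IntervalIntegrable (quantile F) volume a b := by
  rw [intervalIntegrable_iff_integrableOn_Ioo_of_le hab]
  exact hQint.mono_set (Ioo_subset_Ioo h0 hb1)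

lemma integral_quantile_lower (hmono : StrictMono F) (hbot : Tendsto F atBot (nhds 0))
    (htop : Tendsto F atTop (nhds 1)) (hQint : IntegrableOn (quantile F) (Ioo (0:ℝ) 1))
    {a b : ℝ} (h0 : 0 < a) (hab : a ≤ b) (hb1 : b ≤ 1) :
    (b - a) * quantile F a ≤ ∫ t in a..b, quantile F t := by
  rcases eq_or_lt_of_le hab with h | h
  · subst h; simp
  have ha1 : a < 1 := lt_of_lt_of_le h hb1
  rw [intervalIntegral.integral_of_le hab, integral_Ioc_eq_integral_Ioo]
  have hconst : ∫ _ in Ioo a b, quantile F a = (b - a) * quantile F a := by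
    rw [setIntegral_const, Real.volume_real_Ioo_of_le hab, smul_eq_mul]
  rw [← hconst]
  refine setIntegral_mono_on (integrableOn_const ?_)
    (hQint.mono_set (Ioo_subset_Ioo h0.le hb1)) measurableSet_Ioo (fun t ht => ?_)
  · rw [Real.volume_Ioo]; exact ENNReal.ofReal_ne_top
  · exact quantile_mono' hmono hbot htop h0 ht.1.le (lt_of_lt_of_le ht.2 hb1)

lemma integral_quantile_upper (hmono : StrictMono F) (hbot : Tendsto F atBot (nhds 0))
    (htop : Tendsto F atTop (nhds 1)) (hQint : IntegrableOn (quantile F) (Ioo (0:ℝ) 1))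
    {a b : ℝ} (h0 : 0 ≤ a) (hab : a ≤ b) (hb1 : b < 1) :
    ∫ t in a..b, quantile F t ≤ (b - a) * quantile F b := by
  rcases eq_or_lt_of_le hab with h | h
  · subst h; simp
  rw [intervalIntegral.integral_of_le hab, integral_Ioc_eq_integral_Ioo]
  have hconst : ∫ _ in Ioo a b, quantile F b = (b - a) * quantile F b := by
    rw [setIntegral_const, Real.volume_real_Ioo_of_le hab, smul_eq_mul]
  rw [← hconst]
  refine setIntegral_mono_on (hQint.mono_set (Ioo_subset_Ioo h0 hb1.le))
    (integrableOn_const ?_) measurableSet_Ioo (fun t ht => ?_)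
  · rw [Real.volume_Ioo]; exact ENNReal.ofReal_ne_top
  · exact quantile_mono' hmono hbot htop (lt_of_le_of_lt h0 ht.1) ht.2.le hb1

end Aux

theorem stmt2 (K : ℕ) (hK : 1 ≤ K) (F : Fin K → ℝ → ℝ)
    (hmono : ∀ k, StrictMono (F k))
    (hcont : ∀ k, Continuous (F k))
    (h01 : ∀ k s, F k s ∈ Ioo (0:ℝ) 1)
    (hbot : ∀ k, Tendsto (F k) atBot (nhds 0))
    (htop : ∀ k, Tendsto (F k) atTop (nhds 1))
    (hint : ∀ k, IntegrableOn (quantile (F k)) (Ioo (0:ℝ) 1)) :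
    ∀ u p, p ∈ simplex K → IsMaxOn (dopaObj F u) (simplex K) p →
      ∀ k, 0 < p k := by
  intro u p hp hmax k
  by_contra hk0
  have hpk : p k = 0 := le_antisymm (not_lt.mp hk0) (hp.1 k)
  obtain ⟨j, hj⟩ : ∃ j, 0 < p j := by
    by_contra h
    push_neg at h
    have : ∑ i, p i ≤ 0 := Finset.sum_nonpos fun i _ => h i
    linarith [hp.2]
  have hkj : k ≠ j := fun h => by rw [h] at hpk; linarith
  have hpj1 : p j ≤ 1 := by
    have := Finset.single_le_sum (f := p) (fun i _ => hp.1 i) (Finset.mem_univ j)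
    linarith [hp.2]
  set Qh : ℝ := quantile (F j) (1 - p j / 2) with hQh
  set M : ℝ := u j - u k + Qh + 1 with hM
  have hFkM1 : F k M < 1 := (h01 k M).2
  set ε : ℝ := min (p j / 2) ((1 - F k M) / 2) with hε
  have hε0 : 0 < ε := lt_min (by linarith) (by linarith)
  have hεpj : ε ≤ p j / 2 := min_le_left _ _
  have hεF : F k M < 1 - ε := by
    have h2 : ε ≤ (1 - F k M) / 2 := min_le_right _ _
    linarith
  have hε1 : ε < 1 := by linarith
  -- the perturbed point
  set q : Fin K → ℝ := fun i => p i + (if i = k then ε else 0) - (if i = j then ε else 0)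
    with hqdef
  have hqk : q k = ε := by simp [hqdef, hpk, hkj]
  have hqj : q j = p j - ε := by simp [hqdef, Ne.symm hkj]
  have hqmem : q ∈ simplex K := by
    constructor
    · intro i
      by_cases hik : i = k
      · subst hik; rw [hqk]; linarith
      by_cases hij : i = j
      · subst hij; rw [hqj]; linarith
      · simpa [hqdef, hik, hij] using hp.1 i
    · simp [hqdef, Finset.sum_add_distrib, Finset.sum_sub_distrib, Finset.sum_ite_eq',
        hp.2]
  -- first sum
  have hsum1 : ∑ i, u i * q i = ∑ i, u i * p i + ε * u k - ε * u j := by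
    have h1 : ∀ i, u i * q i
        = u i * p i + (if i = k then u i * ε else 0) - (if i = j then u i * ε else 0) := by
      intro i; simp only [hqdef]; split_ifs <;> ring
    rw [Finset.sum_congr rfl (fun i _ => h1 i)]
    rw [Finset.sum_sub_distrib, Finset.sum_add_distrib, Finset.sum_ite_eq', Finset.sum_ite_eq']
    simp; ring
  -- second sum
  set A : ℝ := ∫ t in (1 - ε)..1, quantile (F k) t with hA
  set B : ℝ := (∫ t in (1 - (p j - ε))..1, quantile (F j) t)
    - ∫ t in (1 - p j)..1, quantile (F j) t with hB
  have hsum2 : ∑ i, ∫ t in (1 - q i)..1, quantile (F i) t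
      = (∑ i, ∫ t in (1 - p i)..1, quantile (F i) t) + A + B := by
    have h1 : ∀ i, (∫ t in (1 - q i)..1, quantile (F i) t)
        = (∫ t in (1 - p i)..1, quantile (F i) t)
          + ((if i = k then A else 0) + (if i = j then B else 0)) := by
      intro i
      by_cases hik : i = k
      · subst hik
        simp [hqk, hpk, hkj, hA]
      by_cases hij : i = j
      · subst hij
        rw [hqj, if_neg hik, if_pos rfl, hB]
        ring
      · have : q i = p i := by simp [hqdef, hik, hij]
        simp [this, hik, hij]
    rw [Finset.sum_congr rfl (fun i _ => h1 i)]
    rw [Finset.sum_add_distrib, Finset.sum_add_distrib, Finset.sum_ite_eq', Finset.sum_ite_eq']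
    simp; ring
  -- bound A from below
  have hQk : M ≤ quantile (F k) (1 - ε) :=
    le_quantile (hmono k) (htop k) (by linarith) hεF
  have hAlow : ε * M ≤ A := by
    have := integral_quantile_lower (hmono k) (hbot k) (htop k) (hint k)
      (a := 1 - ε) (b := 1) (by linarith) (by linarith) le_rfl
    have hmul : ε * M ≤ ε * quantile (F k) (1 - ε) :=
      mul_le_mul_of_nonneg_left hQk hε0.le
    calc ε * M ≤ ε * quantile (F k) (1 - ε) := hmul
      _ = (1 - (1 - ε)) * quantile (F k) (1 - ε) := by ring_nf
      _ ≤ A := this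
  -- bound B from below
  have hεltpj : ε < p j := by linarith
  have hadj : (∫ t in (1 - p j)..(1 - p j + ε), quantile (F j) t)
      + ∫ t in (1 - p j + ε)..1, quantile (F j) t
      = ∫ t in (1 - p j)..1, quantile (F j) t := by
    refine intervalIntegral.integral_add_adjacent_intervals ?_ ?_
    · exact quantile_intervalIntegrable (hint j) (by linarith) (by linarith) (by linarith)
    · exact quantile_intervalIntegrable (hint j) (by linarith) (by linarith) le_rfl
  have hloss : (∫ t in (1 - p j)..(1 - p j + ε), quantile (F j) t) ≤ ε * Qh := by
    have h1 := integral_quantile_upper (hmono j) (hbot j) (htop j) (hint j)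
      (a := 1 - p j) (b := 1 - p j + ε) (by linarith) (by linarith) (by linarith)
    have h2 : quantile (F j) (1 - p j + ε) ≤ Qh :=
      quantile_mono' (hmono j) (hbot j) (htop j) (by linarith) (by linarith) (by linarith)
    calc (∫ t in (1 - p j)..(1 - p j + ε), quantile (F j) t)
        ≤ (1 - p j + ε - (1 - p j)) * quantile (F j) (1 - p j + ε) := h1
      _ = ε * quantile (F j) (1 - p j + ε) := by ring_nf
      _ ≤ ε * Qh := mul_le_mul_of_nonneg_left h2 hε0.le
  have hBlow : -(ε * Qh) ≤ B := by
    have hrw : (1 : ℝ) - (p j - ε) = 1 - p j + ε := by ring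
    rw [hB, hrw]
    linarith [hadj, hloss]
  -- conclude
  have hle : dopaObj F u q ≤ dopaObj F u p := hmax hqmem
  rw [dopaObj, dopaObj, hsum1, hsum2] at hle
  have hexp : ε * M = ε * u j - ε * u k + ε * Qh + ε := by rw [hM]; ring
  linarith
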